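/- Wright–Fisher generator identity in the Bernstein basis: for n ≥ 2, v ∈ ℝ^{n+1} and x ∈ ℝ, (x(1−x)/2) · (d²/dx²) ⟨B_n(x), v⟩ = (n(n−1)/2) · ( ⟨B_{n−1}(x), C^{n,2}v⟩ − ⟨B_n(x), v⟩ ), where ⟨B_m(x), w⟩ := ∑_{i=0}^m w_i b_{i,m}(x). -/

import Mathlib

/-- The Bernstein basis polynomial. -/
noncomputable def bern (n i : ℕ) (x : ℝ) : ℝ := (n.choose i : ℝ) * x^i * (1-x)^(n-i)

/-- The pairwise coagulation operator `C^{n,2}` on Bernstein coefficient vectors. -/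
noncomputable def coag2 (n : ℕ) (v : ℕ → ℝ) (i : ℕ) : ℝ :=
  (i : ℝ)/((n : ℝ) - 1) * v (i+1) + (1 - (i : ℝ)/((n : ℝ) - 1)) * v i

noncomputable def dbern (n i : ℕ) (y : ℝ) : ℝ :=
  (n.choose i : ℝ) * ((i:ℝ) * y^(i-1) * (1-y)^(n-i) - ((n-i : ℕ):ℝ) * y^i * (1-y)^(n-i-1))

noncomputable def ddbern (n i : ℕ) (y : ℝ) : ℝ :=
  (n.choose i : ℝ) *
    ( (i:ℝ) * (((i-1:ℕ):ℝ) * y^(i-1-1) * (1-y)^(n-i) - ((n-i:ℕ):ℝ) * y^(i-1) * (1-y)^(n-i-1))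
      - ((n-i:ℕ):ℝ) * ((i:ℝ) * y^(i-1) * (1-y)^(n-i-1) - ((n-i-1:ℕ):ℝ) * y^i * (1-y)^(n-i-1-1)) )

lemma mono_hasDerivAt (a b : ℕ) (y : ℝ) :
    HasDerivAt (fun z : ℝ => z^a * (1-z)^b)
      ((a:ℝ) * y^(a-1) * (1-y)^b - (b:ℝ) * y^a * (1-y)^(b-1)) y := by
  have h1 : HasDerivAt (fun z : ℝ => z ^ a) ((a:ℝ) * y^(a-1)) y := hasDerivAt_pow a y
  have h0 : HasDerivAt (fun z : ℝ => 1 - z) (-1) y := (hasDerivAt_id y).const_sub 1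
  have h2 : HasDerivAt (fun z : ℝ => (1 - z) ^ b) (((b:ℝ) * (1-y)^(b-1)) * (-1)) y :=
    (hasDerivAt_pow b (1-y)).comp y h0
  have h := h1.mul h2
  refine h.congr_deriv ?_
  ring

lemma bern_hasDerivAt (n i : ℕ) (y : ℝ) : HasDerivAt (fun z => bern n i z) (dbern n i y) y := by
  have h := (mono_hasDerivAt i (n-i) y).const_mul ((n.choose i : ℝ))
  have hfun : (fun z => bern n i z) = fun z : ℝ => (n.choose i : ℝ) * (z^i * (1-z)^(n-i)) := by
    funext z; simp only [bern]; ring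
  rw [hfun]
  exact h.congr_deriv rfl

lemma dbern_hasDerivAt (n i : ℕ) (y : ℝ) : HasDerivAt (fun z => dbern n i z) (ddbern n i y) y := by
  have h1 := (mono_hasDerivAt (i-1) (n-i) y).const_mul ((i:ℝ))
  have h2 := (mono_hasDerivAt i (n-i-1) y).const_mul (((n-i:ℕ)):ℝ)
  have h := (h1.sub h2).const_mul ((n.choose i : ℝ))
  have hfun : (fun z => dbern n i z) =
      fun z : ℝ => (n.choose i : ℝ) *
        ((i:ℝ) * (z^(i-1) * (1-z)^(n-i)) - ((n-i:ℕ):ℝ) * (z^i * (1-z)^(n-i-1))) := by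
    funext z; simp only [dbern]; ring
  rw [hfun]
  exact h.congr_deriv rfl

lemma key (n j : ℕ) (hn : 2 ≤ n) (hj : j ≤ n) (x : ℝ) :
    x * (1-x) / 2 * ddbern n j x =
      (n:ℝ) * ((n:ℝ)-1) / 2 *
        ( ((j-1:ℕ):ℝ)/((n:ℝ)-1) * bern (n-1) (j-1) x
          + (1 - (j:ℝ)/((n:ℝ)-1)) * bern (n-1) j x - bern n j x ) := by
  obtain ⟨k, rfl⟩ : ∃ k, n = j + k := ⟨n - j, by omega⟩
  have hj0 : (0:ℝ) ≤ (j:ℝ) := Nat.cast_nonneg _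
  match j, k with
  | 0, (k'+2) =>
    simp only [ddbern, bern]
    push_cast
    simp [Nat.add_sub_cancel]
    ring
  | 1, 0 => omega
  | 1, 1 =>
    simp only [ddbern, bern]
    norm_num
    ring
  | 1, (k'+2) =>
    have hk0 : (0:ℝ) ≤ (k':ℝ) := Nat.cast_nonneg _
    simp only [ddbern, bern,
      show (1:ℕ)+(k'+2)-1 = k'+2 from by omega,
      show (1:ℕ)-1 = 0 from rfl,
      show (1:ℕ)+(k'+2) = k'+3 from by omega]
    simp only [Nat.choose_one_right, Nat.choose_zero_right, Nat.add_sub_cancel,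
      show k'+3-1 = k'+2 from by omega, show k'+2-1 = k'+1 from by omega,
      show (0:ℕ)-1 = 0 from rfl]
    push_cast
    have hne : ((k':ℝ) + 3 - 1) ≠ 0 := by nlinarith
    field_simp
    ring
  | (j'+2), 0 =>
    simp only [ddbern, bern, Nat.add_zero, Nat.sub_self, Nat.add_sub_cancel,
      show j'+2-1 = j'+1 from by omega, show j'+1-1 = j' from by omega,
      show (0:ℕ)-1 = 0 from rfl,
      Nat.choose_self, Nat.choose_eq_zero_of_lt (show j'+1 < j'+2 from by omega)]
    push_cast
    have hne : ((j':ℝ) + 2 - 1) ≠ 0 := by nlinarith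
    field_simp
    ring
  | (j'+2), 1 =>
    simp only [ddbern, bern,
      show j'+2+1-1 = j'+2 from by omega, show j'+2+1-(j'+2) = 1 from by omega,
      show j'+2-(j'+2) = 0 from by omega, show j'+2-1 = j'+1 from by omega,
      show j'+1-1 = j' from by omega, show (1:ℕ)-1 = 0 from rfl, show (0:ℕ)-1 = 0 from rfl,
      show j'+1-j' = 1 from by omega,
      show j'+2+1 = (j'+2)+1 from rfl, Nat.choose_succ_self_right,
      show j'+2 = (j'+1)+1 from rfl, Nat.choose_succ_self_right,
      Nat.choose_self]
    push_cast
    rw [show j' + 1 - j' = 1 from by omega]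
    have hne : ((j':ℝ) + 2 + 1 - 1) ≠ 0 := by nlinarith
    have hne' : ((j':ℝ) + 1 + 1 + 1 - 1) ≠ 0 := by nlinarith
    field_simp
    ring
  | (j'+2), (k'+2) =>
    have hk0 : (0:ℝ) ≤ (k':ℝ) := Nat.cast_nonneg _
    have hj0' : (0:ℝ) ≤ (j':ℝ) := Nat.cast_nonneg _
    have hne4 : ((j':ℝ)+(k':ℝ)+4) ≠ 0 := by nlinarith
    have e1 : (((j'+k'+3).choose (j'+1) : ℕ) : ℝ)
        = (((j'+k'+4).choose (j'+2) : ℕ) : ℝ) * ((j':ℝ)+2) / ((j':ℝ)+(k':ℝ)+4) := by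
      rw [eq_div_iff hne4]
      have h := Nat.add_one_mul_choose_eq (j'+k'+3) (j'+1)
      simp only [Nat.succ_eq_add_one, show j'+k'+3+1 = j'+k'+4 from by omega,
        show j'+1+1 = j'+2 from by omega] at h
      rw [mul_comm] at h
      exact_mod_cast h
    have sym1 : (j'+k'+3).choose (j'+2) = (j'+k'+3).choose (k'+1) := by
      rw [← Nat.choose_symm (show k'+1 ≤ j'+k'+3 from by omega)]
      congr 1; omega
    have sym0 : (j'+k'+4).choose (k'+2) = (j'+k'+4).choose (j'+2) := by
      rw [← Nat.choose_symm (show j'+2 ≤ j'+k'+4 from by omega)]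
      congr 1; omega
    have e2 : (((j'+k'+3).choose (j'+2) : ℕ) : ℝ)
        = (((j'+k'+4).choose (j'+2) : ℕ) : ℝ) * ((k':ℝ)+2) / ((j':ℝ)+(k':ℝ)+4) := by
      rw [eq_div_iff hne4, sym1, ← sym0]
      have h := Nat.add_one_mul_choose_eq (j'+k'+3) (k'+1)
      simp only [Nat.succ_eq_add_one, show j'+k'+3+1 = j'+k'+4 from by omega,
        show k'+1+1 = k'+2 from by omega] at h
      rw [mul_comm] at h
      exact_mod_cast h
    simp only [ddbern, bern,
      show j'+2+(k'+2) = j'+k'+4 from by omega,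
      show j'+k'+4-(j'+2) = k'+2 from by omega,
      show j'+k'+4-1 = j'+k'+3 from by omega,
      show j'+2-1 = j'+1 from by omega, show j'+1-1 = j' from by omega,
      show k'+2-1 = k'+1 from by omega, show k'+1-1 = k' from by omega,
      show j'+k'+3-(j'+2) = k'+1 from by omega,
      show j'+k'+3-(j'+1) = k'+2 from by omega]
    rw [e1, e2]
    push_cast
    have hne : ((j':ℝ)+(k':ℝ)+4-1) ≠ 0 := by nlinarith
    field_simp
    ring

/-- Wright–Fisher generator identity in the Bernstein basis. -/
theorem wright_fisher_generator_bernstein (n : ℕ) (hn : 2 ≤ n) (v : ℕ → ℝ) (x : ℝ) :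
    x * (1 - x) / 2 *
        deriv (deriv (fun y => ∑ i ∈ Finset.range (n+1), v i * bern n i y)) x =
      (n : ℝ) * ((n : ℝ) - 1) / 2 *
        ((∑ i ∈ Finset.range n, coag2 n v i * bern (n-1) i x) -
          ∑ i ∈ Finset.range (n+1), v i * bern n i x) := by
  -- derivatives
  have hd1 : deriv (fun y => ∑ i ∈ Finset.range (n+1), v i * bern n i y)
      = fun y => ∑ i ∈ Finset.range (n+1), v i * dbern n i y := by
    funext y
    exact (HasDerivAt.fun_sum fun i _ => (bern_hasDerivAt n i y).const_mul (v i)).deriv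
  have hd2 : deriv (deriv (fun y => ∑ i ∈ Finset.range (n+1), v i * bern n i y)) x
      = ∑ i ∈ Finset.range (n+1), v i * ddbern n i x := by
    rw [hd1]
    exact (HasDerivAt.fun_sum fun i _ => (dbern_hasDerivAt n i x).const_mul (v i)).deriv
  rw [hd2]
  -- reindex the coagulation sum
  have hS1 : (∑ i ∈ Finset.range n, coag2 n v i * bern (n-1) i x)
      = ∑ j ∈ Finset.range (n+1), v j *
          ( ((j-1:ℕ):ℝ)/((n:ℝ)-1) * bern (n-1) (j-1) x
            + (1 - (j:ℝ)/((n:ℝ)-1)) * bern (n-1) j x ) := by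
    have e1 : ∑ j ∈ Finset.range (n+1), v j * (((j-1:ℕ):ℝ)/((n:ℝ)-1) * bern (n-1) (j-1) x)
        = ∑ i ∈ Finset.range n, v (i+1) * (((i:ℕ):ℝ)/((n:ℝ)-1) * bern (n-1) i x) := by
      rw [Finset.sum_range_succ']
      simp
    have e2 : ∑ j ∈ Finset.range (n+1), v j * ((1 - (j:ℝ)/((n:ℝ)-1)) * bern (n-1) j x)
        = ∑ i ∈ Finset.range n, v i * ((1 - (i:ℝ)/((n:ℝ)-1)) * bern (n-1) i x) := by
      rw [Finset.sum_range_succ]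
      have : bern (n-1) n x = 0 := by
        simp [bern, Nat.choose_eq_zero_of_lt (show n-1 < n by omega)]
      simp [this]
    calc ∑ i ∈ Finset.range n, coag2 n v i * bern (n-1) i x
        = (∑ i ∈ Finset.range n, v (i+1) * (((i:ℕ):ℝ)/((n:ℝ)-1) * bern (n-1) i x))
          + ∑ i ∈ Finset.range n, v i * ((1 - (i:ℝ)/((n:ℝ)-1)) * bern (n-1) i x) := by
          rw [← Finset.sum_add_distrib]
          apply Finset.sum_congr rfl
          intro i _
          simp only [coag2]
          ring
      _ = _ := by
          rw [← e1, ← e2, ← Finset.sum_add_distrib]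
          apply Finset.sum_congr rfl
          intro j _
          ring
  rw [hS1, ← Finset.sum_sub_distrib, Finset.mul_sum, Finset.mul_sum]
  apply Finset.sum_congr rfl
  intro j hj
  have hj' : j ≤ n := by simpa [Nat.lt_succ_iff] using Finset.mem_range.mp hj
  have := key n j hn hj' x
  calc x * (1-x) / 2 * (v j * ddbern n j x) = v j * (x * (1-x) / 2 * ddbern n j x) := by ring
    _ = _ := by rw [this]; ring
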